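/- Let d ≥ 1, γ ≥ 0, μ > γ/2, and let F, G : [−π,π]^d → ℂ be continuous. Define φ(t,n) := (2π)^{−d} ∫_{[−π,π]^d} e^{i p·n} ( Ĉ(t,p) F(p) + Ŝ(t,p) G(p) ) dp for t ≥ 0 and n ∈ ℤ^d. Then for each n ∈ ℤ^d the map t ↦ φ(t,n) is twice differentiable on [0,∞) and satisfies ∂ₜ²φ(t,n) + γ ∂ₜφ(t,n) − (Δ₁φ)(t,n) + μ² φ(t,n) = 0 for all t ≥ 0, where (Δ₁φ)(t,n) = ∑_{j=1}^d ( φ(t,n+e_j) + φ(t,n−e_j) − 2φ(t,n) ), together with the initial conditions φ(0,n) = (2π)^{−d} ∫_{[−π,π]^d} e^{i p·n} F(p) dp and ∂ₜφ(0,n) = (2π)^{−d} ∫_{[−π,π]^d} e^{i p·n} G(p) dp. -/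

import Mathlib

open scoped BigOperators

/-- `ω(p)² = Ω(p) + μ²` with `Ω(p) = 2 ∑_j (1 − cos p_j)` (lattice dispersion, mesh 1). -/
noncomputable def omegaSq (d : ℕ) (μ : ℝ) (p : Fin d → ℝ) : ℝ :=
  2 * ∑ j : Fin d, (1 - Real.cos (p j)) + μ ^ 2

/-- `r₊(p) = (−γ + √(γ² − 4ω(p)²))/2`, principal complex square root. -/
noncomputable def rPlusP (d : ℕ) (γ μ : ℝ) (p : Fin d → ℝ) : ℂ :=
  (-(γ : ℂ) + ((γ : ℂ) ^ 2 - 4 * (omegaSq d μ p : ℂ)) ^ ((1 : ℂ) / 2)) / 2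

/-- `r₋(p) = (−γ − √(γ² − 4ω(p)²))/2`, principal complex square root. -/
noncomputable def rMinusP (d : ℕ) (γ μ : ℝ) (p : Fin d → ℝ) : ℂ :=
  (-(γ : ℂ) - ((γ : ℂ) ^ 2 - 4 * (omegaSq d μ p : ℂ)) ^ ((1 : ℂ) / 2)) / 2

/-- `Ŝ(t,p) = (e^{r₊(p) t} − e^{r₋(p) t})/(r₊(p) − r₋(p))`. -/
noncomputable def Shat (d : ℕ) (γ μ : ℝ) (t : ℝ) (p : Fin d → ℝ) : ℂ :=
  (Complex.exp (rPlusP d γ μ p * t) - Complex.exp (rMinusP d γ μ p * t)) /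
    (rPlusP d γ μ p - rMinusP d γ μ p)

/-- `Ĉ(t,p) = (r₊(p) e^{r₋(p) t} − r₋(p) e^{r₊(p) t})/(r₊(p) − r₋(p))`. -/
noncomputable def Chat (d : ℕ) (γ μ : ℝ) (t : ℝ) (p : Fin d → ℝ) : ℂ :=
  (rPlusP d γ μ p * Complex.exp (rMinusP d γ μ p * t)
      - rMinusP d γ μ p * Complex.exp (rPlusP d γ μ p * t)) /
    (rPlusP d γ μ p - rMinusP d γ μ p)

/-- The homogeneous solution
`φ(t,n) = (2π)^{−d} ∫_{[−π,π]^d} e^{i p·n} ( Ĉ(t,p) F(p) + Ŝ(t,p) G(p) ) dp`. -/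
noncomputable def homSol (d : ℕ) (γ μ : ℝ) (F G : (Fin d → ℝ) → ℂ)
    (t : ℝ) (n : Fin d → ℤ) : ℂ :=
  (((2 * Real.pi) ^ d : ℝ) : ℂ)⁻¹ *
    ∫ p in Set.Icc (fun _ : Fin d => -Real.pi) (fun _ : Fin d => Real.pi),
      Complex.exp (Complex.I * ((∑ j : Fin d, p j * (n j : ℝ) : ℝ) : ℂ)) *
        (Chat d γ μ t p * F p + Shat d γ μ t p * G p)

lemma cpow_half_neg (x : ℝ) (hx : x < 0) :
    (x:ℂ) ^ ((1:ℂ)/2) = Complex.I * Real.sqrt (-x) := by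
  have hx0 : (x:ℂ) ≠ 0 := by exact_mod_cast ne_of_lt hx
  rw [Complex.cpow_def_of_ne_zero hx0]
  have hlog : Complex.log (x:ℂ) = Real.log (-x) + Real.pi * Complex.I := by
    rw [Complex.log, Complex.arg_ofReal_of_neg hx]
    simp [Complex.norm_real, abs_of_neg hx]
  have h2 : ((Real.log (-x) : ℂ) + Real.pi * Complex.I) * (1/2)
      = (Real.log (-x) / 2 : ℝ) + (Real.pi/2 : ℝ) * Complex.I := by
    push_cast; ring
  rw [hlog, h2, Complex.exp_add, Complex.exp_mul_I]
  rw [← Complex.ofReal_cos, ← Complex.ofReal_sin, Real.cos_pi_div_two, Real.sin_pi_div_two]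
  have : Real.exp (Real.log (-x) / 2) = Real.sqrt (-x) := by
    rw [Real.sqrt_eq_rpow, Real.rpow_def_of_pos (by linarith)]
    ring_nf
  rw [← Complex.ofReal_exp, this]
  simp [mul_comm]

section
variable {d : ℕ} {γ μ : ℝ}

lemma disc_neg (hγ : 0 ≤ γ) (hmass : γ/2 < μ) (p : Fin d → ℝ) :
    γ^2 - 4 * omegaSq d μ p < 0 := by
  have h1 : 0 ≤ ∑ j : Fin d, (1 - Real.cos (p j)) :=
    Finset.sum_nonneg fun j _ => by have := Real.cos_le_one (p j); linarith
  have h2 : (γ/2)^2 < μ^2 := by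
    have h0 : 0 ≤ γ/2 := by linarith
    nlinarith
  unfold omegaSq; nlinarith

/-- σ(p) = √(4ω² − γ²) -/
noncomputable def sigmaP (d : ℕ) (γ μ : ℝ) (p : Fin d → ℝ) : ℝ :=
  Real.sqrt (4 * omegaSq d μ p - γ^2)

lemma sigma_pos (hγ : 0 ≤ γ) (hmass : γ/2 < μ) (p : Fin d → ℝ) :
    0 < sigmaP d γ μ p :=
  Real.sqrt_pos.2 (by have := disc_neg hγ hmass p; linarith)

lemma sqrtDisc (hγ : 0 ≤ γ) (hmass : γ/2 < μ) (p : Fin d → ℝ) :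
    ((γ:ℂ)^2 - 4 * (omegaSq d μ p : ℂ)) ^ ((1:ℂ)/2)
      = Complex.I * (sigmaP d γ μ p : ℝ) := by
  have h : ((γ:ℂ)^2 - 4 * (omegaSq d μ p : ℂ)) = ((γ^2 - 4 * omegaSq d μ p : ℝ) : ℂ) := by
    push_cast; ring
  rw [h, cpow_half_neg _ (disc_neg hγ hmass p)]
  unfold sigmaP
  norm_num

lemma rPlus_eq (hγ : 0 ≤ γ) (hmass : γ/2 < μ) (p : Fin d → ℝ) :
    rPlusP d γ μ p = (-(γ:ℂ) + Complex.I * (sigmaP d γ μ p : ℝ)) / 2 := by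
  rw [rPlusP, sqrtDisc hγ hmass]

lemma rMinus_eq (hγ : 0 ≤ γ) (hmass : γ/2 < μ) (p : Fin d → ℝ) :
    rMinusP d γ μ p = (-(γ:ℂ) - Complex.I * (sigmaP d γ μ p : ℝ)) / 2 := by
  rw [rMinusP, sqrtDisc hγ hmass]

lemma r_sub (hγ : 0 ≤ γ) (hmass : γ/2 < μ) (p : Fin d → ℝ) :
    rPlusP d γ μ p - rMinusP d γ μ p = Complex.I * (sigmaP d γ μ p : ℝ) := by
  rw [rPlus_eq hγ hmass, rMinus_eq hγ hmass]; ring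

lemma r_sub_ne (hγ : 0 ≤ γ) (hmass : γ/2 < μ) (p : Fin d → ℝ) :
    rPlusP d γ μ p - rMinusP d γ μ p ≠ 0 := by
  rw [r_sub hγ hmass]
  simp [Complex.I_ne_zero, Complex.ofReal_eq_zero, (sigma_pos hγ hmass p).ne']

lemma r_add (p : Fin d → ℝ) : rPlusP d γ μ p + rMinusP d γ μ p = -(γ:ℂ) := by
  rw [rPlusP, rMinusP]; ring

lemma r_mul (hγ : 0 ≤ γ) (hmass : γ/2 < μ) (p : Fin d → ℝ) :
    rPlusP d γ μ p * rMinusP d γ μ p = (omegaSq d μ p : ℂ) := by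
  have hne : ((γ:ℂ)^2 - 4 * (omegaSq d μ p : ℂ)) ≠ 0 := by
    have h : ((γ:ℂ)^2 - 4 * (omegaSq d μ p : ℂ)) = ((γ^2 - 4 * omegaSq d μ p : ℝ) : ℂ) := by
      push_cast; ring
    rw [h]
    exact_mod_cast (disc_neg hγ hmass p).ne
  have hsq : (((γ:ℂ)^2 - 4 * (omegaSq d μ p : ℂ)) ^ ((1:ℂ)/2))^2
      = (γ:ℂ)^2 - 4 * (omegaSq d μ p : ℂ) := by
    have := Complex.cpow_nat_inv_pow ((γ:ℂ)^2 - 4 * (omegaSq d μ p : ℂ)) (n := 2) (by norm_num)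
    simpa [show (((2:ℕ):ℂ))⁻¹ = (1:ℂ)/2 by norm_num] using this
  rw [rPlusP, rMinusP]
  linear_combination (-(1:ℂ)/4) * hsq

lemma quadPlus (hγ : 0 ≤ γ) (hmass : γ/2 < μ) (p : Fin d → ℝ) :
    rPlusP d γ μ p ^ 2 + (γ:ℂ) * rPlusP d γ μ p + (omegaSq d μ p : ℂ) = 0 := by
  linear_combination rPlusP d γ μ p * r_add (γ := γ) (μ := μ) p - r_mul hγ hmass p

lemma quadMinus (hγ : 0 ≤ γ) (hmass : γ/2 < μ) (p : Fin d → ℝ) :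
    rMinusP d γ μ p ^ 2 + (γ:ℂ) * rMinusP d γ μ p + (omegaSq d μ p : ℂ) = 0 := by
  linear_combination rMinusP d γ μ p * r_add (γ := γ) (μ := μ) p - r_mul hγ hmass p

lemma omegaSq_continuous : Continuous (omegaSq d μ) := by
  unfold omegaSq
  exact (continuous_const.mul (continuous_finset_sum _ fun j _ =>
    (continuous_const.sub (Real.continuous_cos.comp (continuous_apply j))))).add
    continuous_const

lemma sigma_continuous : Continuous (sigmaP d γ μ) := by
  unfold sigmaP
  exact ((continuous_const.mul omegaSq_continuous).sub continuous_const).sqrt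

lemma rPlus_continuous (hγ : 0 ≤ γ) (hmass : γ/2 < μ) :
    Continuous (rPlusP d γ μ) := by
  have : rPlusP d γ μ = fun p => (-(γ:ℂ) + Complex.I * (sigmaP d γ μ p : ℝ)) / 2 :=
    funext (rPlus_eq hγ hmass)
  rw [this]
  exact (continuous_const.add (continuous_const.mul (Complex.continuous_ofReal.comp
    (sigma_continuous (γ := γ))))).div_const 2

lemma rMinus_continuous (hγ : 0 ≤ γ) (hmass : γ/2 < μ) :
    Continuous (rMinusP d γ μ) := by
  have : rMinusP d γ μ = fun p => (-(γ:ℂ) - Complex.I * (sigmaP d γ μ p : ℝ)) / 2 :=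
    funext (rMinus_eq hγ hmass)
  rw [this]
  exact (continuous_const.sub (continuous_const.mul (Complex.continuous_ofReal.comp
    (sigma_continuous (γ := γ))))).div_const 2

lemma rPlus_re (hγ : 0 ≤ γ) (hmass : γ/2 < μ) (p : Fin d → ℝ) :
    (rPlusP d γ μ p).re = -γ/2 := by
  rw [rPlus_eq hγ hmass]
  simp [Complex.div_re]

lemma rMinus_re (hγ : 0 ≤ γ) (hmass : γ/2 < μ) (p : Fin d → ℝ) :
    (rMinusP d γ μ p).re = -γ/2 := by
  rw [rMinus_eq hγ hmass]
  simp [Complex.div_re]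

end

noncomputable def kern (d : ℕ) (n : Fin d → ℤ) (p : Fin d → ℝ) : ℂ :=
  Complex.exp (Complex.I * ((∑ j : Fin d, p j * (n j : ℝ) : ℝ) : ℂ))

abbrev Kd (d : ℕ) : Set (Fin d → ℝ) :=
  Set.Icc (fun _ : Fin d => -Real.pi) (fun _ : Fin d => Real.pi)

lemma kern_continuous (d : ℕ) (n : Fin d → ℤ) : Continuous (kern d n) := by
  unfold kern
  exact Complex.continuous_exp.comp (continuous_const.mul
    (Complex.continuous_ofReal.comp (continuous_finset_sum _ fun j _ =>
      (continuous_apply j).mul continuous_const)))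

lemma kern_norm (d : ℕ) (n : Fin d → ℤ) (p : Fin d → ℝ) : ‖kern d n p‖ = 1 := by
  unfold kern
  rw [Complex.norm_exp]
  simp

lemma hasDerivAt_cexp_real (r : ℂ) (t : ℝ) :
    HasDerivAt (fun τ : ℝ => Complex.exp (r * τ)) (r * Complex.exp (r * t)) t := by
  have h : HasDerivAt (fun z : ℂ => Complex.exp (r * z)) (Complex.exp (r * t) * (r * 1)) (t : ℂ) :=
    (Complex.hasDerivAt_exp (r * t)).comp _ ((hasDerivAt_id (t : ℂ)).const_mul r)
  simpa [mul_comm] using h.comp_ofReal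

section
variable {d : ℕ} {γ μ : ℝ}

set_option maxHeartbeats 1000000 in
lemma hasDerivAt_master (hγ : 0 ≤ γ) (hmass : γ/2 < μ) {A B : (Fin d → ℝ) → ℂ}
    (hA : ContinuousOn A (Kd d)) (hB : ContinuousOn B (Kd d)) (n : Fin d → ℤ) (t : ℝ) :
    HasDerivAt (fun τ : ℝ => ∫ p in Kd d, kern d n p *
        (A p * Complex.exp (rPlusP d γ μ p * τ) + B p * Complex.exp (rMinusP d γ μ p * τ)))
      (∫ p in Kd d, kern d n p *
        (rPlusP d γ μ p * A p * Complex.exp (rPlusP d γ μ p * t)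
          + rMinusP d γ μ p * B p * Complex.exp (rMinusP d γ μ p * t))) t := by
  have hKc : IsCompact (Kd d) := isCompact_Icc
  have hKm : MeasurableSet (Kd d) := measurableSet_Icc
  set E : ℝ := Real.exp (γ * (|t| + 1) / 2) with hE
  have hc0 : ∀ τ : ℝ, ContinuousOn (fun p => kern d n p *
      (A p * Complex.exp (rPlusP d γ μ p * τ) + B p * Complex.exp (rMinusP d γ μ p * τ)))
      (Kd d) := by
    intro τ
    exact ((kern_continuous d n).continuousOn).mul
      ((hA.mul (Complex.continuous_exp.comp
          ((rPlus_continuous hγ hmass).mul continuous_const)).continuousOn).add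
        (hB.mul (Complex.continuous_exp.comp
          ((rMinus_continuous hγ hmass).mul continuous_const)).continuousOn))
  have hc1 : ∀ τ : ℝ, ContinuousOn (fun p => kern d n p *
      (rPlusP d γ μ p * A p * Complex.exp (rPlusP d γ μ p * τ)
        + rMinusP d γ μ p * B p * Complex.exp (rMinusP d γ μ p * τ)))
      (Kd d) := by
    intro τ
    exact ((kern_continuous d n).continuousOn).mul
      ((((rPlus_continuous hγ hmass).continuousOn.mul hA).mul (Complex.continuous_exp.comp
          ((rPlus_continuous hγ hmass).mul continuous_const)).continuousOn).add
        (((rMinus_continuous hγ hmass).continuousOn.mul hB).mul (Complex.continuous_exp.comp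
          ((rMinus_continuous hγ hmass).mul continuous_const)).continuousOn))
  have hnormexp : ∀ z : ℂ, ‖Complex.exp z‖ = Real.exp z.re := fun z => by
    rw [Complex.norm_exp]
  have hre : ∀ (r : ℂ), r.re = -γ/2 → ∀ τ : ℝ, τ ∈ Metric.ball t 1 →
      ((r * (τ : ℂ)).re) ≤ γ * (|t| + 1) / 2 := by
    intro r hr τ hτ
    have h1 : (r * (τ : ℂ)).re = -γ/2 * τ := by
      simp [Complex.mul_re, hr]
    rw [h1]
    have h2 : |τ - t| < 1 := by simpa [Real.dist_eq] using hτ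
    have hτabs : |τ| ≤ |t| + 1 := by
      have := abs_sub_abs_le_abs_sub τ t
      linarith [le_of_lt h2]
    nlinarith [neg_le_abs τ, abs_nonneg τ]
  have hbound : ∀ᵐ p ∂(MeasureTheory.volume.restrict (Kd d)), ∀ τ ∈ Metric.ball t 1,
      ‖kern d n p * (rPlusP d γ μ p * A p * Complex.exp (rPlusP d γ μ p * τ)
          + rMinusP d γ μ p * B p * Complex.exp (rMinusP d γ μ p * τ))‖
        ≤ (‖rPlusP d γ μ p‖ * ‖A p‖ + ‖rMinusP d γ μ p‖ * ‖B p‖) * E := by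
    refine Filter.Eventually.of_forall fun p τ hτ => ?_
    rw [norm_mul, kern_norm, one_mul]
    refine (norm_add_le _ _).trans ?_
    rw [norm_mul, norm_mul, norm_mul, norm_mul, hnormexp, hnormexp]
    have e1 : Real.exp ((rPlusP d γ μ p * (τ:ℂ)).re) ≤ E :=
      Real.exp_le_exp.2 (hre _ (rPlus_re hγ hmass p) τ hτ)
    have e2 : Real.exp ((rMinusP d γ μ p * (τ:ℂ)).re) ≤ E :=
      Real.exp_le_exp.2 (hre _ (rMinus_re hγ hmass p) τ hτ)
    have b1 := mul_le_mul_of_nonneg_left e1 (by positivity : (0:ℝ) ≤ ‖rPlusP d γ μ p‖ * ‖A p‖)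
    have b2 := mul_le_mul_of_nonneg_left e2 (by positivity : (0:ℝ) ≤ ‖rMinusP d γ μ p‖ * ‖B p‖)
    nlinarith
  have hbint : MeasureTheory.Integrable
      (fun p => (‖rPlusP d γ μ p‖ * ‖A p‖ + ‖rMinusP d γ μ p‖ * ‖B p‖) * E)
      (MeasureTheory.volume.restrict (Kd d)) := by
    refine ContinuousOn.integrableOn_compact hKc ?_
    exact ((((rPlus_continuous hγ hmass).norm.continuousOn).mul hA.norm).add
      (((rMinus_continuous hγ hmass).norm.continuousOn).mul hB.norm)).mul continuousOn_const
  have hdiff : ∀ᵐ p ∂(MeasureTheory.volume.restrict (Kd d)), ∀ τ ∈ Metric.ball t 1,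
      HasDerivAt (fun τ : ℝ => kern d n p *
          (A p * Complex.exp (rPlusP d γ μ p * τ) + B p * Complex.exp (rMinusP d γ μ p * τ)))
        (kern d n p * (rPlusP d γ μ p * A p * Complex.exp (rPlusP d γ μ p * τ)
          + rMinusP d γ μ p * B p * Complex.exp (rMinusP d γ μ p * τ))) τ := by
    refine Filter.Eventually.of_forall fun p τ _ => ?_
    have h1 := (hasDerivAt_cexp_real (rPlusP d γ μ p) τ).const_mul (A p)
    have h2 := (hasDerivAt_cexp_real (rMinusP d γ μ p) τ).const_mul (B p)
    have h3 := (h1.add h2).const_mul (kern d n p)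
    exact h3.congr_deriv (by ring)
  have hmeas : ∀ᶠ τ : ℝ in nhds t, MeasureTheory.AEStronglyMeasurable (fun p => kern d n p *
      (A p * Complex.exp (rPlusP d γ μ p * τ) + B p * Complex.exp (rMinusP d γ μ p * τ)))
      (MeasureTheory.volume.restrict (Kd d)) :=
    Filter.Eventually.of_forall fun τ => ((hc0 τ).aestronglyMeasurable hKm)
  have hint : MeasureTheory.Integrable (fun p => kern d n p *
      (A p * Complex.exp (rPlusP d γ μ p * t) + B p * Complex.exp (rMinusP d γ μ p * t)))
      (MeasureTheory.volume.restrict (Kd d)) := (hc0 t).integrableOn_compact hKc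
  have hmeas' : MeasureTheory.AEStronglyMeasurable (fun p => kern d n p *
      (rPlusP d γ μ p * A p * Complex.exp (rPlusP d γ μ p * t)
        + rMinusP d γ μ p * B p * Complex.exp (rMinusP d γ μ p * t)))
      (MeasureTheory.volume.restrict (Kd d)) := (hc1 t).aestronglyMeasurable hKm
  exact (hasDerivAt_integral_of_dominated_loc_of_deriv_le (Metric.ball_mem_nhds t one_pos)
    hmeas hint hmeas' hbound hbint hdiff).2

end

section
variable {d : ℕ} {γ μ : ℝ}

noncomputable def coefA (d : ℕ) (γ μ : ℝ) (F G : (Fin d → ℝ) → ℂ) (p : Fin d → ℝ) : ℂ :=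
  (G p - rMinusP d γ μ p * F p) / (rPlusP d γ μ p - rMinusP d γ μ p)

noncomputable def coefB (d : ℕ) (γ μ : ℝ) (F G : (Fin d → ℝ) → ℂ) (p : Fin d → ℝ) : ℂ :=
  (rPlusP d γ μ p * F p - G p) / (rPlusP d γ μ p - rMinusP d γ μ p)

variable {F G : (Fin d → ℝ) → ℂ}

lemma coefA_continuousOn (hγ : 0 ≤ γ) (hmass : γ/2 < μ)
    (hF : ContinuousOn F (Kd d)) (hG : ContinuousOn G (Kd d)) :
    ContinuousOn (coefA d γ μ F G) (Kd d) := by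
  unfold coefA
  exact (hG.sub ((rMinus_continuous hγ hmass).continuousOn.mul hF)).div
    (((rPlus_continuous hγ hmass).sub (rMinus_continuous hγ hmass)).continuousOn)
    fun p _ => r_sub_ne hγ hmass p

lemma coefB_continuousOn (hγ : 0 ≤ γ) (hmass : γ/2 < μ)
    (hF : ContinuousOn F (Kd d)) (hG : ContinuousOn G (Kd d)) :
    ContinuousOn (coefB d γ μ F G) (Kd d) := by
  unfold coefB
  exact (((rPlus_continuous hγ hmass).continuousOn.mul hF).sub hG).div
    (((rPlus_continuous hγ hmass).sub (rMinus_continuous hγ hmass)).continuousOn)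
    fun p _ => r_sub_ne hγ hmass p

lemma eq_AB (hγ : 0 ≤ γ) (hmass : γ/2 < μ) (t : ℝ) (p : Fin d → ℝ) :
    Chat d γ μ t p * F p + Shat d γ μ t p * G p
      = coefA d γ μ F G p * Complex.exp (rPlusP d γ μ p * t)
        + coefB d γ μ F G p * Complex.exp (rMinusP d γ μ p * t) := by
  have hne := r_sub_ne hγ hmass p
  rw [Chat, Shat, coefA, coefB]
  field_simp
  ring

lemma coef_sum (hγ : 0 ≤ γ) (hmass : γ/2 < μ) (p : Fin d → ℝ) :
    coefA d γ μ F G p + coefB d γ μ F G p = F p := by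
  have hne := r_sub_ne hγ hmass p
  rw [coefA, coefB]
  field_simp
  ring

lemma coef_vel (hγ : 0 ≤ γ) (hmass : γ/2 < μ) (p : Fin d → ℝ) :
    rPlusP d γ μ p * coefA d γ μ F G p + rMinusP d γ μ p * coefB d γ μ F G p = G p := by
  have hne := r_sub_ne hγ hmass p
  rw [coefA, coefB]
  field_simp
  ring

lemma sum_single_mul (n : Fin d → ℤ) (j : Fin d) (p : Fin d → ℝ) :
    ∑ i : Fin d, p i * ((Pi.single j 1 : Fin d → ℤ) i : ℝ) = p j := by
  have h2 : ∀ i : Fin d, p i * (((Pi.single j 1 : Fin d → ℤ) i : ℤ) : ℝ)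
      = if i = j then p i else 0 := by
    intro i; rw [Pi.single_apply]; by_cases hij : i = j <;> simp [hij]
  rw [Finset.sum_congr rfl fun i _ => h2 i, Finset.sum_ite_eq' Finset.univ j fun i => p i]
  simp

lemma kern_add_single (n : Fin d → ℤ) (j : Fin d) (p : Fin d → ℝ) :
    kern d (n + Pi.single j 1) p = kern d n p * Complex.exp (Complex.I * (p j : ℂ)) := by
  unfold kern
  rw [← Complex.exp_add]
  congr 1
  have hsum : (∑ i : Fin d, p i * (((n + Pi.single j 1 : Fin d → ℤ) i : ℤ) : ℝ))
      = (∑ i : Fin d, p i * (n i : ℝ)) + p j := by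
    simp only [Pi.add_apply, Int.cast_add, mul_add, Finset.sum_add_distrib]
    rw [sum_single_mul n j p]
  rw [hsum]
  push_cast
  ring

lemma kern_sub_single (n : Fin d → ℤ) (j : Fin d) (p : Fin d → ℝ) :
    kern d (n - Pi.single j 1) p = kern d n p * Complex.exp (-(Complex.I * (p j : ℂ))) := by
  unfold kern
  rw [← Complex.exp_add]
  congr 1
  have hsum : (∑ i : Fin d, p i * (((n - Pi.single j 1 : Fin d → ℤ) i : ℤ) : ℝ))
      = (∑ i : Fin d, p i * (n i : ℝ)) - p j := by
    simp only [Pi.sub_apply, Int.cast_sub, mul_sub, Finset.sum_sub_distrib]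
    rw [sum_single_mul n j p]
  rw [hsum]
  push_cast
  ring

lemma euler_sum (x : ℝ) :
    Complex.exp (Complex.I * (x : ℂ)) + Complex.exp (-(Complex.I * (x : ℂ)))
      = ((2 * Real.cos x : ℝ) : ℂ) := by
  rw [mul_comm Complex.I (x:ℂ), Complex.exp_mul_I, ← neg_mul, Complex.exp_mul_I]
  rw [Complex.cos_neg, Complex.sin_neg, ← Complex.ofReal_cos]
  push_cast
  ring

end


section
variable {d : ℕ} {γ μ : ℝ}

lemma Chat_zero (hγ : 0 ≤ γ) (hmass : γ/2 < μ) (p : Fin d → ℝ) :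
    Chat d γ μ 0 p = 1 := by
  rw [Chat]
  simp only [Complex.ofReal_zero, mul_zero, Complex.exp_zero, mul_one]
  exact div_self (r_sub_ne hγ hmass p)

lemma Shat_zero (p : Fin d → ℝ) : Shat d γ μ 0 p = 0 := by
  rw [Shat]
  simp

lemma pde_alg (hγ : 0 ≤ γ) (hmass : γ/2 < μ) (p : Fin d → ℝ) (k a b ep em : ℂ) :
    k * (rPlusP d γ μ p * (rPlusP d γ μ p * a) * ep
        + rMinusP d γ μ p * (rMinusP d γ μ p * b) * em)
      + (γ:ℂ) * (k * (rPlusP d γ μ p * a * ep + rMinusP d γ μ p * b * em))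
      - (∑ j : Fin d, (k * Complex.exp (Complex.I * (p j : ℂ)) * (a * ep + b * em)
          + k * Complex.exp (-(Complex.I * (p j : ℂ))) * (a * ep + b * em)
          - 2 * (k * (a * ep + b * em))))
      + (μ:ℂ)^2 * (k * (a * ep + b * em)) = 0 := by
  have hsum : (∑ j : Fin d, (k * Complex.exp (Complex.I * (p j : ℂ)) * (a * ep + b * em)
          + k * Complex.exp (-(Complex.I * (p j : ℂ))) * (a * ep + b * em)
          - 2 * (k * (a * ep + b * em))))
      = (∑ j : Fin d, (Complex.exp (Complex.I * (p j : ℂ))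
          + Complex.exp (-(Complex.I * (p j : ℂ))) - 2)) * (k * (a * ep + b * em)) := by
    rw [Finset.sum_mul]
    exact Finset.sum_congr rfl fun j _ => by ring
  have hkey : (μ:ℂ)^2 - (∑ j : Fin d, (Complex.exp (Complex.I * (p j : ℂ))
          + Complex.exp (-(Complex.I * (p j : ℂ))) - 2)) = (omegaSq d μ p : ℂ) := by
    rw [Finset.sum_congr rfl fun j (_ : j ∈ Finset.univ) => by rw [euler_sum (p j)]]
    rw [omegaSq]
    push_cast
    rw [Finset.sum_sub_distrib, Finset.sum_sub_distrib, ← Finset.mul_sum]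
    simp only [Finset.sum_const, Finset.card_univ, Fintype.card_fin, nsmul_eq_mul]
    ring
  linear_combination (-1:ℂ) * hsum + (k * (a * ep + b * em)) * hkey
    + (k * a * ep) * quadPlus hγ hmass p + (k * b * em) * quadMinus hγ hmass p

lemma sum_factor (w : ℂ) (x y z : Fin d → ℂ) :
    ∑ j : Fin d, (w * x j + w * y j - 2 * (w * z j))
      = w * ∑ j : Fin d, (x j + y j - 2 * z j) := by
  rw [Finset.mul_sum]
  exact Finset.sum_congr rfl fun j _ => by ring

end

theorem homogeneous_solution_lattice_KG
    (d : ℕ) (hd : 1 ≤ d) (γ μ : ℝ) (hγ : 0 ≤ γ) (hmass : γ / 2 < μ)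
    (F G : (Fin d → ℝ) → ℂ)
    (hF : ContinuousOn F (Set.Icc (fun _ : Fin d => -Real.pi) (fun _ : Fin d => Real.pi)))
    (hG : ContinuousOn G (Set.Icc (fun _ : Fin d => -Real.pi) (fun _ : Fin d => Real.pi))) :
    ∃ φ' φ'' : ℝ → (Fin d → ℤ) → ℂ,
      (∀ n : Fin d → ℤ, ∀ t : ℝ, 0 ≤ t →
        HasDerivWithinAt (fun τ : ℝ => homSol d γ μ F G τ n) (φ' t n) (Set.Ici 0) t) ∧
      (∀ n : Fin d → ℤ, ∀ t : ℝ, 0 ≤ t →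
        HasDerivWithinAt (fun τ : ℝ => φ' τ n) (φ'' t n) (Set.Ici 0) t) ∧
      (∀ n : Fin d → ℤ, ∀ t : ℝ, 0 ≤ t →
        φ'' t n + (γ : ℂ) * φ' t n
          - (∑ j : Fin d, (homSol d γ μ F G t (n + Pi.single j 1)
              + homSol d γ μ F G t (n - Pi.single j 1) - 2 * homSol d γ μ F G t n))
          + ((μ : ℂ)) ^ 2 * homSol d γ μ F G t n = 0) ∧
      (∀ n : Fin d → ℤ,
        homSol d γ μ F G 0 n
          = (((2 * Real.pi) ^ d : ℝ) : ℂ)⁻¹ *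
              ∫ p in Set.Icc (fun _ : Fin d => -Real.pi) (fun _ : Fin d => Real.pi),
                Complex.exp (Complex.I * ((∑ j : Fin d, p j * (n j : ℝ) : ℝ) : ℂ)) * F p) ∧
      (∀ n : Fin d → ℤ,
        φ' 0 n
          = (((2 * Real.pi) ^ d : ℝ) : ℂ)⁻¹ *
              ∫ p in Set.Icc (fun _ : Fin d => -Real.pi) (fun _ : Fin d => Real.pi),
                Complex.exp (Complex.I * ((∑ j : Fin d, p j * (n j : ℝ) : ℝ) : ℂ)) * G p) := by
  classical
  have hKc : IsCompact (Set.Icc (fun _ : Fin d => -Real.pi) (fun _ : Fin d => Real.pi)) := isCompact_Icc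
  have hKm : MeasurableSet (Set.Icc (fun _ : Fin d => -Real.pi) (fun _ : Fin d => Real.pi)) := measurableSet_Icc
  have hA : ContinuousOn (coefA d γ μ F G) (Set.Icc (fun _ : Fin d => -Real.pi) (fun _ : Fin d => Real.pi)) := coefA_continuousOn hγ hmass hF hG
  have hB : ContinuousOn (coefB d γ μ F G) (Set.Icc (fun _ : Fin d => -Real.pi) (fun _ : Fin d => Real.pi)) := coefB_continuousOn hγ hmass hF hG
  have hA1 : ContinuousOn (fun p => rPlusP d γ μ p * coefA d γ μ F G p) (Set.Icc (fun _ : Fin d => -Real.pi) (fun _ : Fin d => Real.pi)) :=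
    (rPlus_continuous hγ hmass).continuousOn.mul hA
  have hB1 : ContinuousOn (fun p => rMinusP d γ μ p * coefB d γ μ F G p) (Set.Icc (fun _ : Fin d => -Real.pi) (fun _ : Fin d => Real.pi)) :=
    (rMinus_continuous hγ hmass).continuousOn.mul hB
  have hA2 : ContinuousOn (fun p => rPlusP d γ μ p * (rPlusP d γ μ p * coefA d γ μ F G p)) (Set.Icc (fun _ : Fin d => -Real.pi) (fun _ : Fin d => Real.pi)) :=
    (rPlus_continuous hγ hmass).continuousOn.mul hA1
  have hB2 : ContinuousOn (fun p => rMinusP d γ μ p * (rMinusP d γ μ p * coefB d γ μ F G p)) (Set.Icc (fun _ : Fin d => -Real.pi) (fun _ : Fin d => Real.pi)) :=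
    (rMinus_continuous hγ hmass).continuousOn.mul hB1
  have hrep : ∀ (t : ℝ) (n : Fin d → ℤ), homSol d γ μ F G t n
      = (((2 * Real.pi) ^ d : ℝ) : ℂ)⁻¹ * ∫ p in Set.Icc (fun _ : Fin d => -Real.pi) (fun _ : Fin d => Real.pi), kern d n p * (coefA d γ μ F G p * Complex.exp (rPlusP d γ μ p * t) + coefB d γ μ F G p * Complex.exp (rMinusP d γ μ p * t)) := by
    intro t n
    rw [homSol]
    congr 1
    refine MeasureTheory.integral_congr_ae (Filter.Eventually.of_forall fun p => ?_)
    exact congrArg (fun z => kern d n p * z) (eq_AB hγ hmass t p)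
  refine ⟨fun t n => (((2 * Real.pi) ^ d : ℝ) : ℂ)⁻¹ * ∫ p in Set.Icc (fun _ : Fin d => -Real.pi) (fun _ : Fin d => Real.pi), kern d n p * (rPlusP d γ μ p * coefA d γ μ F G p * Complex.exp (rPlusP d γ μ p * t) + rMinusP d γ μ p * coefB d γ μ F G p * Complex.exp (rMinusP d γ μ p * t)),
          fun t n => (((2 * Real.pi) ^ d : ℝ) : ℂ)⁻¹ * ∫ p in Set.Icc (fun _ : Fin d => -Real.pi) (fun _ : Fin d => Real.pi), kern d n p * (rPlusP d γ μ p * (rPlusP d γ μ p * coefA d γ μ F G p) * Complex.exp (rPlusP d γ μ p * t) + rMinusP d γ μ p * (rMinusP d γ μ p * coefB d γ μ F G p) * Complex.exp (rMinusP d γ μ p * t)), ?_, ?_, ?_, ?_, ?_⟩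
  · intro n t ht
    have hfun : (fun τ : ℝ => homSol d γ μ F G τ n)
        = fun τ : ℝ => (((2 * Real.pi) ^ d : ℝ) : ℂ)⁻¹ * ∫ p in Set.Icc (fun _ : Fin d => -Real.pi) (fun _ : Fin d => Real.pi), kern d n p * (coefA d γ μ F G p * Complex.exp (rPlusP d γ μ p * τ) + coefB d γ μ F G p * Complex.exp (rMinusP d γ μ p * τ)) :=
      funext fun τ => hrep τ n
    rw [hfun]
    exact ((hasDerivAt_master hγ hmass hA hB n t).const_mul (((2 * Real.pi) ^ d : ℝ) : ℂ)⁻¹).hasDerivWithinAt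
  · intro n t ht
    exact ((hasDerivAt_master hγ hmass hA1 hB1 n t).const_mul (((2 * Real.pi) ^ d : ℝ) : ℂ)⁻¹).hasDerivWithinAt
  · intro n t ht
    have hexpP : Continuous (fun p : Fin d → ℝ => Complex.exp (rPlusP d γ μ p * t)) :=
      Complex.continuous_exp.comp ((rPlus_continuous hγ hmass).mul continuous_const)
    have hexpM : Continuous (fun p : Fin d → ℝ => Complex.exp (rMinusP d γ μ p * t)) :=
      Complex.continuous_exp.comp ((rMinus_continuous hγ hmass).mul continuous_const)
    have hUc : ContinuousOn (fun p => (coefA d γ μ F G p * Complex.exp (rPlusP d γ μ p * t) + coefB d γ μ F G p * Complex.exp (rMinusP d γ μ p * t))) (Set.Icc (fun _ : Fin d => -Real.pi) (fun _ : Fin d => Real.pi)) :=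
      (hA.mul hexpP.continuousOn).add (hB.mul hexpM.continuousOn)
    have hVc : ContinuousOn (fun p => (rPlusP d γ μ p * coefA d γ μ F G p * Complex.exp (rPlusP d γ μ p * t) + rMinusP d γ μ p * coefB d γ μ F G p * Complex.exp (rMinusP d γ μ p * t))) (Set.Icc (fun _ : Fin d => -Real.pi) (fun _ : Fin d => Real.pi)) :=
      (hA1.mul hexpP.continuousOn).add (hB1.mul hexpM.continuousOn)
    have hWc : ContinuousOn (fun p => (rPlusP d γ μ p * (rPlusP d γ μ p * coefA d γ μ F G p) * Complex.exp (rPlusP d γ μ p * t) + rMinusP d γ μ p * (rMinusP d γ μ p * coefB d γ μ F G p) * Complex.exp (rMinusP d γ μ p * t))) (Set.Icc (fun _ : Fin d => -Real.pi) (fun _ : Fin d => Real.pi)) :=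
      (hA2.mul hexpP.continuousOn).add (hB2.mul hexpM.continuousOn)
    have iU : MeasureTheory.IntegrableOn (fun p => kern d n p * (coefA d γ μ F G p * Complex.exp (rPlusP d γ μ p * t) + coefB d γ μ F G p * Complex.exp (rMinusP d γ μ p * t))) (Set.Icc (fun _ : Fin d => -Real.pi) (fun _ : Fin d => Real.pi)) :=
      (((kern_continuous d n).continuousOn.mul hUc).integrableOn_compact hKc)
    have iV : MeasureTheory.IntegrableOn (fun p => kern d n p * (rPlusP d γ μ p * coefA d γ μ F G p * Complex.exp (rPlusP d γ μ p * t) + rMinusP d γ μ p * coefB d γ μ F G p * Complex.exp (rMinusP d γ μ p * t))) (Set.Icc (fun _ : Fin d => -Real.pi) (fun _ : Fin d => Real.pi)) :=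
      (((kern_continuous d n).continuousOn.mul hVc).integrableOn_compact hKc)
    have iW : MeasureTheory.IntegrableOn (fun p => kern d n p * (rPlusP d γ μ p * (rPlusP d γ μ p * coefA d γ μ F G p) * Complex.exp (rPlusP d γ μ p * t) + rMinusP d γ μ p * (rMinusP d γ μ p * coefB d γ μ F G p) * Complex.exp (rMinusP d γ μ p * t))) (Set.Icc (fun _ : Fin d => -Real.pi) (fun _ : Fin d => Real.pi)) :=
      (((kern_continuous d n).continuousOn.mul hWc).integrableOn_compact hKc)
    have iUp : ∀ j : Fin d, MeasureTheory.IntegrableOn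
        (fun p => kern d n p * Complex.exp (Complex.I * (p j : ℂ)) * (coefA d γ μ F G p * Complex.exp (rPlusP d γ μ p * t) + coefB d γ μ F G p * Complex.exp (rMinusP d γ μ p * t))) (Set.Icc (fun _ : Fin d => -Real.pi) (fun _ : Fin d => Real.pi)) := by
      intro j
      have hej : Continuous (fun p : Fin d → ℝ => Complex.exp (Complex.I * (p j : ℂ))) :=
        Complex.continuous_exp.comp (continuous_const.mul
          (Complex.continuous_ofReal.comp (continuous_apply j)))
      exact ((((kern_continuous d n).continuousOn.mul hej.continuousOn).mul
        hUc).integrableOn_compact hKc)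
    have iUm : ∀ j : Fin d, MeasureTheory.IntegrableOn
        (fun p => kern d n p * Complex.exp (-(Complex.I * (p j : ℂ))) * (coefA d γ μ F G p * Complex.exp (rPlusP d γ μ p * t) + coefB d γ μ F G p * Complex.exp (rMinusP d γ μ p * t))) (Set.Icc (fun _ : Fin d => -Real.pi) (fun _ : Fin d => Real.pi)) := by
      intro j
      have hej : Continuous (fun p : Fin d → ℝ => Complex.exp (-(Complex.I * (p j : ℂ)))) :=
        Complex.continuous_exp.comp ((continuous_const.mul
          (Complex.continuous_ofReal.comp (continuous_apply j))).neg)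
      exact ((((kern_continuous d n).continuousOn.mul hej.continuousOn).mul
        hUc).integrableOn_compact hKc)
    have hSint : MeasureTheory.Integrable (fun p => ∑ j : Fin d,
        (kern d n p * Complex.exp (Complex.I * (p j : ℂ)) * (coefA d γ μ F G p * Complex.exp (rPlusP d γ μ p * t) + coefB d γ μ F G p * Complex.exp (rMinusP d γ μ p * t)) + kern d n p * Complex.exp (-(Complex.I * (p j : ℂ))) * (coefA d γ μ F G p * Complex.exp (rPlusP d γ μ p * t) + coefB d γ μ F G p * Complex.exp (rMinusP d γ μ p * t))
          - 2 * (kern d n p * (coefA d γ μ F G p * Complex.exp (rPlusP d γ μ p * t) + coefB d γ μ F G p * Complex.exp (rMinusP d γ μ p * t)))))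
        (MeasureTheory.volume.restrict (Set.Icc (fun _ : Fin d => -Real.pi) (fun _ : Fin d => Real.pi))) :=
      MeasureTheory.integrable_finset_sum _ (fun j _ =>
        (((iUp j).add (iUm j)).sub (iU.const_mul 2)))
    have hstep : (∫ p in Set.Icc (fun _ : Fin d => -Real.pi) (fun _ : Fin d => Real.pi), (kern d n p * (rPlusP d γ μ p * (rPlusP d γ μ p * coefA d γ μ F G p) * Complex.exp (rPlusP d γ μ p * t) + rMinusP d γ μ p * (rMinusP d γ μ p * coefB d γ μ F G p) * Complex.exp (rMinusP d γ μ p * t)) + (γ:ℂ) * (kern d n p * (rPlusP d γ μ p * coefA d γ μ F G p * Complex.exp (rPlusP d γ μ p * t) + rMinusP d γ μ p * coefB d γ μ F G p * Complex.exp (rMinusP d γ μ p * t)))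
          - (∑ j : Fin d, (kern d n p * Complex.exp (Complex.I * (p j : ℂ)) * (coefA d γ μ F G p * Complex.exp (rPlusP d γ μ p * t) + coefB d γ μ F G p * Complex.exp (rMinusP d γ μ p * t)) + kern d n p * Complex.exp (-(Complex.I * (p j : ℂ))) * (coefA d γ μ F G p * Complex.exp (rPlusP d γ μ p * t) + coefB d γ μ F G p * Complex.exp (rMinusP d γ μ p * t))
              - 2 * (kern d n p * (coefA d γ μ F G p * Complex.exp (rPlusP d γ μ p * t) + coefB d γ μ F G p * Complex.exp (rMinusP d γ μ p * t)))))
          + ((μ:ℂ))^2 * (kern d n p * (coefA d γ μ F G p * Complex.exp (rPlusP d γ μ p * t) + coefB d γ μ F G p * Complex.exp (rMinusP d γ μ p * t)))))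
        = (∫ p in Set.Icc (fun _ : Fin d => -Real.pi) (fun _ : Fin d => Real.pi), kern d n p * (rPlusP d γ μ p * (rPlusP d γ μ p * coefA d γ μ F G p) * Complex.exp (rPlusP d γ μ p * t) + rMinusP d γ μ p * (rMinusP d γ μ p * coefB d γ μ F G p) * Complex.exp (rMinusP d γ μ p * t))) + (γ:ℂ) * (∫ p in Set.Icc (fun _ : Fin d => -Real.pi) (fun _ : Fin d => Real.pi), kern d n p * (rPlusP d γ μ p * coefA d γ μ F G p * Complex.exp (rPlusP d γ μ p * t) + rMinusP d γ μ p * coefB d γ μ F G p * Complex.exp (rMinusP d γ μ p * t)))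
          - (∑ j : Fin d, ((∫ p in Set.Icc (fun _ : Fin d => -Real.pi) (fun _ : Fin d => Real.pi), kern d n p * Complex.exp (Complex.I * (p j : ℂ)) * (coefA d γ μ F G p * Complex.exp (rPlusP d γ μ p * t) + coefB d γ μ F G p * Complex.exp (rMinusP d γ μ p * t))) + (∫ p in Set.Icc (fun _ : Fin d => -Real.pi) (fun _ : Fin d => Real.pi), kern d n p * Complex.exp (-(Complex.I * (p j : ℂ))) * (coefA d γ μ F G p * Complex.exp (rPlusP d γ μ p * t) + coefB d γ μ F G p * Complex.exp (rMinusP d γ μ p * t))) - 2 * (∫ p in Set.Icc (fun _ : Fin d => -Real.pi) (fun _ : Fin d => Real.pi), kern d n p * (coefA d γ μ F G p * Complex.exp (rPlusP d γ μ p * t) + coefB d γ μ F G p * Complex.exp (rMinusP d γ μ p * t)))))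
          + ((μ:ℂ))^2 * (∫ p in Set.Icc (fun _ : Fin d => -Real.pi) (fun _ : Fin d => Real.pi), kern d n p * (coefA d γ μ F G p * Complex.exp (rPlusP d γ μ p * t) + coefB d γ μ F G p * Complex.exp (rMinusP d γ μ p * t))) := by
      have i1 : MeasureTheory.Integrable (fun p => kern d n p * (rPlusP d γ μ p * (rPlusP d γ μ p * coefA d γ μ F G p) * Complex.exp (rPlusP d γ μ p * t) + rMinusP d γ μ p * (rMinusP d γ μ p * coefB d γ μ F G p) * Complex.exp (rMinusP d γ μ p * t))
          + (γ:ℂ) * (kern d n p * (rPlusP d γ μ p * coefA d γ μ F G p * Complex.exp (rPlusP d γ μ p * t) + rMinusP d γ μ p * coefB d γ μ F G p * Complex.exp (rMinusP d γ μ p * t)))) (MeasureTheory.volume.restrict (Set.Icc (fun _ : Fin d => -Real.pi) (fun _ : Fin d => Real.pi))) :=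
        iW.add (iV.const_mul _)
      have i2 : MeasureTheory.Integrable (fun p => kern d n p * (rPlusP d γ μ p * (rPlusP d γ μ p * coefA d γ μ F G p) * Complex.exp (rPlusP d γ μ p * t) + rMinusP d γ μ p * (rMinusP d γ μ p * coefB d γ μ F G p) * Complex.exp (rMinusP d γ μ p * t))
          + (γ:ℂ) * (kern d n p * (rPlusP d γ μ p * coefA d γ μ F G p * Complex.exp (rPlusP d γ μ p * t) + rMinusP d γ μ p * coefB d γ μ F G p * Complex.exp (rMinusP d γ μ p * t))) - (∑ j : Fin d, (kern d n p * Complex.exp (Complex.I * (p j : ℂ)) * (coefA d γ μ F G p * Complex.exp (rPlusP d γ μ p * t) + coefB d γ μ F G p * Complex.exp (rMinusP d γ μ p * t)) + kern d n p * Complex.exp (-(Complex.I * (p j : ℂ))) * (coefA d γ μ F G p * Complex.exp (rPlusP d γ μ p * t) + coefB d γ μ F G p * Complex.exp (rMinusP d γ μ p * t)) - 2 * (kern d n p * (coefA d γ μ F G p * Complex.exp (rPlusP d γ μ p * t) + coefB d γ μ F G p * Complex.exp (rMinusP d γ μ p * t))))))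
          (MeasureTheory.volume.restrict (Set.Icc (fun _ : Fin d => -Real.pi) (fun _ : Fin d => Real.pi))) := i1.sub hSint
      have i3 : ∀ j : Fin d, MeasureTheory.Integrable (fun p => kern d n p * Complex.exp (Complex.I * (p j : ℂ)) * (coefA d γ μ F G p * Complex.exp (rPlusP d γ μ p * t) + coefB d γ μ F G p * Complex.exp (rMinusP d γ μ p * t))
          + kern d n p * Complex.exp (-(Complex.I * (p j : ℂ))) * (coefA d γ μ F G p * Complex.exp (rPlusP d γ μ p * t) + coefB d γ μ F G p * Complex.exp (rMinusP d γ μ p * t))) (MeasureTheory.volume.restrict (Set.Icc (fun _ : Fin d => -Real.pi) (fun _ : Fin d => Real.pi))) :=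
        fun j => (iUp j).add (iUm j)
      have i4 : ∀ j : Fin d, MeasureTheory.Integrable (fun p => kern d n p * Complex.exp (Complex.I * (p j : ℂ)) * (coefA d γ μ F G p * Complex.exp (rPlusP d γ μ p * t) + coefB d γ μ F G p * Complex.exp (rMinusP d γ μ p * t))
          + kern d n p * Complex.exp (-(Complex.I * (p j : ℂ))) * (coefA d γ μ F G p * Complex.exp (rPlusP d γ μ p * t) + coefB d γ μ F G p * Complex.exp (rMinusP d γ μ p * t)) - 2 * (kern d n p * (coefA d γ μ F G p * Complex.exp (rPlusP d γ μ p * t) + coefB d γ μ F G p * Complex.exp (rMinusP d γ μ p * t))))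
          (MeasureTheory.volume.restrict (Set.Icc (fun _ : Fin d => -Real.pi) (fun _ : Fin d => Real.pi))) := fun j => (i3 j).sub (iU.const_mul 2)
      rw [MeasureTheory.integral_add i2 (iU.const_mul _),
        MeasureTheory.integral_sub i1 hSint,
        MeasureTheory.integral_add iW (iV.const_mul _),
        MeasureTheory.integral_finset_sum _ (fun j _ => i4 j),
        MeasureTheory.integral_const_mul, MeasureTheory.integral_const_mul]
      rw [Finset.sum_congr rfl (fun (j : Fin d) (_ : j ∈ Finset.univ) => by
        rw [MeasureTheory.integral_sub (i3 j) (iU.const_mul 2),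
          MeasureTheory.integral_add (iUp j) (iUm j), MeasureTheory.integral_const_mul])]
    have hJ : (∫ p in Set.Icc (fun _ : Fin d => -Real.pi) (fun _ : Fin d => Real.pi), kern d n p * (rPlusP d γ μ p * (rPlusP d γ μ p * coefA d γ μ F G p) * Complex.exp (rPlusP d γ μ p * t) + rMinusP d γ μ p * (rMinusP d γ μ p * coefB d γ μ F G p) * Complex.exp (rMinusP d γ μ p * t))) + (γ:ℂ) * (∫ p in Set.Icc (fun _ : Fin d => -Real.pi) (fun _ : Fin d => Real.pi), kern d n p * (rPlusP d γ μ p * coefA d γ μ F G p * Complex.exp (rPlusP d γ μ p * t) + rMinusP d γ μ p * coefB d γ μ F G p * Complex.exp (rMinusP d γ μ p * t)))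
        - (∑ j : Fin d, ((∫ p in Set.Icc (fun _ : Fin d => -Real.pi) (fun _ : Fin d => Real.pi), kern d n p * Complex.exp (Complex.I * (p j : ℂ)) * (coefA d γ μ F G p * Complex.exp (rPlusP d γ μ p * t) + coefB d γ μ F G p * Complex.exp (rMinusP d γ μ p * t))) + (∫ p in Set.Icc (fun _ : Fin d => -Real.pi) (fun _ : Fin d => Real.pi), kern d n p * Complex.exp (-(Complex.I * (p j : ℂ))) * (coefA d γ μ F G p * Complex.exp (rPlusP d γ μ p * t) + coefB d γ μ F G p * Complex.exp (rMinusP d γ μ p * t))) - 2 * (∫ p in Set.Icc (fun _ : Fin d => -Real.pi) (fun _ : Fin d => Real.pi), kern d n p * (coefA d γ μ F G p * Complex.exp (rPlusP d γ μ p * t) + coefB d γ μ F G p * Complex.exp (rMinusP d γ μ p * t)))))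
        + ((μ:ℂ))^2 * (∫ p in Set.Icc (fun _ : Fin d => -Real.pi) (fun _ : Fin d => Real.pi), kern d n p * (coefA d γ μ F G p * Complex.exp (rPlusP d γ μ p * t) + coefB d γ μ F G p * Complex.exp (rMinusP d γ μ p * t))) = 0 := by
      rw [← hstep]
      rw [MeasureTheory.integral_congr_ae (Filter.Eventually.of_forall fun p =>
        pde_alg hγ hmass p (kern d n p) (coefA d γ μ F G p) (coefB d γ μ F G p)
          (Complex.exp (rPlusP d γ μ p * t)) (Complex.exp (rMinusP d γ μ p * t)))]
      simp
    simp only [hrep, kern_add_single, kern_sub_single]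
    rw [sum_factor]
    linear_combination (((2 * Real.pi) ^ d : ℝ) : ℂ)⁻¹ * hJ
  · intro n
    rw [homSol]
    congr 1
    refine MeasureTheory.integral_congr_ae (Filter.Eventually.of_forall fun p => ?_)
    simp only [Chat_zero hγ hmass, Shat_zero]
    ring
  · intro n
    beta_reduce
    congr 1
    refine MeasureTheory.integral_congr_ae (Filter.Eventually.of_forall fun p => ?_)
    simp only [kern, Complex.ofReal_zero, mul_zero, Complex.exp_zero, mul_one]
    rw [coef_vel hγ hmass p]
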